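/- Let M = (1/2)·[[1,1,0,0],[1,1,0,0],[0,0,1,1],[0,0,1,1]] (a 4×4 real matrix) and let X = (1,0,0,0)ᵀ ∈ ℝ⁴. Then M is symmetric and idempotent (Mᵀ = M and M·M = M), so M is its own Moore–Penrose pseudoinverse (it satisfies M·M·M = M, (M·M)ᵀ = M·M). Furthermore Xᵀ·(M·M)·X = 1/2 while (Xᵀ·(M·M)·X)·(Xᵀ·(M·M)·X) = 1/4, and 1/2 > 1/4. Consequently, with T⁺TA = AT⁺T = (T⁺TA)⁺ = (AT⁺T)⁺ = M (which occurs for A = I₄ and the explicit T of the companion statement), the inequality Xᵀ(T⁺TA)⁺(T⁺TA)X ≤ Xᵀ(T⁺TA)⁺(AT⁺T)⁺X · Xᵀ(AT⁺T)(T⁺TA)X fails. -/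

import Mathlib

open Matrix

theorem counterexample_inequality_fails :
    let M : Matrix (Fin 4) (Fin 4) ℝ :=
      (1/2 : ℝ) • !![1, 1, 0, 0; 1, 1, 0, 0; 0, 0, 1, 1; 0, 0, 1, 1]
    let X : Matrix (Fin 4) (Fin 1) ℝ := !![1; 0; 0; 0]
    Mᵀ = M ∧ M * M = M ∧ M * M * M = M ∧ (M * M)ᵀ = M * M ∧
      (Xᵀ * (M * M) * X) 0 0 = 1/2 ∧
      ((Xᵀ * (M * M) * X) 0 0) * ((Xᵀ * (M * M) * X) 0 0) = 1/4 ∧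
      (1/2 : ℝ) > 1/4 ∧
      ¬ ((Xᵀ * (M * M) * X) 0 0 ≤
          ((Xᵀ * (M * M) * X) 0 0) * ((Xᵀ * (M * M) * X) 0 0)) := by
  intro M X
  have hM : M = !![1/2, 1/2, 0, 0; 1/2, 1/2, 0, 0; 0, 0, 1/2, 1/2; 0, 0, 1/2, 1/2] := by
    ext i j
    fin_cases i <;> fin_cases j <;> norm_num [M]
  have hT : Mᵀ = M := by
    rw [hM]; ext i j; fin_cases i <;> fin_cases j <;> norm_num
  have hMM : M * M = M := by
    rw [hM]; ext i j
    fin_cases i <;> fin_cases j <;> norm_num [Matrix.mul_apply, Fin.sum_univ_four, Matrix.vecHead, Matrix.vecTail, Matrix.cons_val_two, Matrix.cons_val_three]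
  have hval : (Xᵀ * (M * M) * X) 0 0 = 1/2 := by
    rw [hMM, hM]
    norm_num [X, Matrix.mul_apply, Fin.sum_univ_four, Matrix.vecHead, Matrix.vecTail, Matrix.cons_val_two, Matrix.cons_val_three]
  exact ⟨hT, hMM, by rw [hMM, hMM], by rw [hMM, hT], hval, by rw [hval]; norm_num,
    by norm_num, by rw [hval]; norm_num⟩
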